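/- Let ℓ be an odd prime and let p, q be positive integers with ℓ ∣ p and p ≥ 4q + 1. In the polynomial ring (ℤ/ℓℤ)[X], the formal derivative of the reduction of Φ_{p,q} modulo ℓ equals 2q·X^{p−4q−1}·(X^{4q} − 1)·(−2X^{4q} + X^{2q} − 2). -/

import Mathlib

open Polynomial

/-- The polynomial `Φ_{p,q} = X^{2p} - X^{p+4q} + X^{p+2q} + 2X^p + X^{p-2q} - X^{p-4q} + 1`. -/
noncomputable def Phi (p q : ℕ) : Polynomial ℤ :=
  X ^ (2 * p) - X ^ (p + 4 * q) + X ^ (p + 2 * q) + 2 * X ^ p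
    + X ^ (p - 2 * q) - X ^ (p - 4 * q) + 1

/-- Let `ℓ` be an odd prime and `p, q` positive integers with `ℓ ∣ p` and
`p ≥ 4q + 1`. In `(ℤ/ℓℤ)[X]`, the formal derivative of the reduction of `Φ_{p,q}` mod `ℓ`
equals `2q · X^{p-4q-1} · (X^{4q} - 1) · (-2X^{4q} + X^{2q} - 2)`. -/
theorem derivative_Phi_mod_ell
    (ℓ : ℕ) (hℓ : ℓ.Prime) (hℓodd : Odd ℓ)
    (p q : ℕ) (hq : 0 < q) (hdvd : ℓ ∣ p) (hp : 4 * q + 1 ≤ p) :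
    Polynomial.derivative ((Phi p q).map (Int.castRingHom (ZMod ℓ))) =
      Polynomial.C ((2 * q : ℕ) : ZMod ℓ) * X ^ (p - 4 * q - 1) *
        (X ^ (4 * q) - 1) * (-2 * X ^ (4 * q) + X ^ (2 * q) - 2) := by
  have h0 : ((p : ℕ) : ZMod ℓ) = 0 := (ZMod.natCast_eq_zero_iff p ℓ).2 hdvd
  obtain ⟨n, rfl⟩ : ∃ n, p = 4 * q + 1 + n := ⟨p - (4 * q + 1), by omega⟩
  have e1 : 2 * (4 * q + 1 + n) = (2 * n + 8 * q + 1) + 1 := by ring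
  have e2 : 4 * q + 1 + n + 4 * q = (n + 8 * q) + 1 := by ring
  have e3 : 4 * q + 1 + n + 2 * q = (n + 6 * q) + 1 := by ring
  have e4 : 4 * q + 1 + n = (n + 4 * q) + 1 := by ring
  have e5 : 4 * q + 1 + n - 2 * q = (n + 2 * q) + 1 := by omega
  have e6 : 4 * q + 1 + n - 4 * q = n + 1 := by omega
  have e7 : 4 * q + 1 + n - 4 * q - 1 = n := by omega
  rw [Phi, e1, e2, e3, e7, e6, e5, e4]
  simp only [Polynomial.map_add, Polynomial.map_sub, Polynomial.map_pow, Polynomial.map_mul,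
    Polynomial.map_one, Polynomial.map_X, Polynomial.map_ofNat, derivative_add, derivative_sub,
    derivative_mul, derivative_X_pow, derivative_one, Nat.add_sub_cancel, derivative_ofNat]
  push_cast at h0
  have hn : (n : ZMod ℓ) = -(4 * (q : ZMod ℓ) + 1) := by linear_combination h0
  simp only [Nat.cast_add, Nat.cast_mul, Nat.cast_ofNat, Nat.cast_one, hn, map_add, map_mul,
    map_one, map_neg, map_ofNat]
  ring
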